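/- arXiv:1504.00093 — 2 statements merged into one kernel-verified Lean document; each statement's English description precedes it below -/
import Mathlib

section
/- For any two objects M and X of 𝒟: X belongs to M∗[T[1]] if and only if Hom_𝒟(T, X′) belongs to Fac Hom_𝒟(T, M′) in mod Λ, where Fac N denotes the subcategory of factor modules of finite direct sums of copies of N. -/
/- Common definitions for formalizing "Relative cluster tilting objects in
triangulated categories" (Yang–Zhu). -/

open CategoryTheory CategoryTheory.Limits CategoryTheory.Pretriangulated

universe w v u

attribute [local instance] CategoryTheory.Limits.hasBinaryBiproducts_of_finite_biproducts

namespace RelCT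

section CatDefs

variable {C : Type u} [Category.{v} C]

/-- `Y` is a direct summand of `X`. -/
def IsSummand (Y X : C) : Prop := ∃ (i : Y ⟶ X) (p : X ⟶ Y), i ≫ p = 𝟙 Y

variable [Preadditive C] [HasFiniteBiproducts C]

/-- `X` belongs to `add M`: it is a direct summand of a finite direct sum of copies of `M`. -/
def InAdd (M X : C) : Prop := ∃ n : ℕ, IsSummand X (⨁ (fun _ : Fin n => M))

/-- `X` is indecomposable. -/
def Indec (X : C) : Prop := ¬ IsZero X ∧ ∀ (Y Z : C), (X ≅ Y ⊞ Z) → IsZero Y ∨ IsZero Z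

/-- The setoid of indecomposable direct summands of `X` up to isomorphism. -/
def summandSetoid (X : C) : Setoid {Y : C // Indec Y ∧ IsSummand Y X} where
  r A B := Nonempty (A.1 ≅ B.1)
  iseqv := ⟨fun A => ⟨Iso.refl _⟩, fun h => h.elim fun e => ⟨e.symm⟩,
    fun h1 h2 => h1.elim fun e1 => h2.elim fun e2 => ⟨e1.trans e2⟩⟩

/-- `|X|`: the number of non-isomorphic indecomposable direct summands of `X`. -/
noncomputable def numIndec (X : C) : ℕ := Nat.card (Quotient (summandSetoid X))

/-- `X` is basic: it has no repeated indecomposable direct summands; equivalently (under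
Krull–Schmidt), no direct summand of the form `Y ⊞ Y` with `Y ≠ 0`. -/
def IsBasic (X : C) : Prop := ∀ Y : C, ¬ IsZero Y → ¬ IsSummand (Y ⊞ Y) X

/-- `f` factors through an object of `add M`. -/
def FactorsThruAdd (M : C) {X Y : C} (f : X ⟶ Y) : Prop :=
  ∃ (Z : C) (g : X ⟶ Z) (h : Z ⟶ Y), InAdd M Z ∧ f = g ≫ h

/-- Krull–Schmidt property: every object is a finite biproduct of objects with local
endomorphism rings. -/
def KrullSchmidt (C : Type u) [Category.{v} C] [Preadditive C] [HasFiniteBiproducts C] : Prop :=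
  ∀ X : C, ∃ (n : ℕ) (f : Fin n → C) (_ : X ≅ ⨁ f), ∀ i, IsLocalRing (End (f i))

section LinearDefs

variable (k : Type w) [Field k] [CategoryTheory.Linear k C]

/-- The ideal `[M](X, Y)`: the subgroup of `Hom(X, Y)` of morphisms factoring through `add M`
(realized as the `k`-span of the set of such morphisms, which coincides with that set). -/
def idealSubmodule (M X Y : C) : Submodule k (X ⟶ Y) :=
  Submodule.span k {f : X ⟶ Y | FactorsThruAdd M f}

lemma mem_ideal_of_factors {M X Y : C} {f : X ⟶ Y} (h : FactorsThruAdd M f) :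
    f ∈ idealSubmodule k M X Y := Submodule.subset_span h

lemma ideal_precomp {M X X' Y : C} (f : X ⟶ X') {g : X' ⟶ Y}
    (hg : g ∈ idealSubmodule k M X' Y) : f ≫ g ∈ idealSubmodule k M X Y := by
  induction hg using Submodule.span_induction with
  | mem a ha =>
      obtain ⟨Z, u, v, hZ, rfl⟩ := ha
      exact Submodule.subset_span ⟨Z, f ≫ u, v, hZ, by simp⟩
  | zero =>
      rw [comp_zero]
      exact Submodule.zero_mem _
  | add a b ha hb h1 h2 =>
      rw [Preadditive.comp_add]
      exact Submodule.add_mem _ h1 h2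
  | smul c a ha h1 =>
      rw [CategoryTheory.Linear.comp_smul]
      exact Submodule.smul_mem _ c h1

lemma ideal_postcomp {M X Y Y' : C} {g : X ⟶ Y} (f : Y ⟶ Y')
    (hg : g ∈ idealSubmodule k M X Y) : g ≫ f ∈ idealSubmodule k M X Y' := by
  induction hg using Submodule.span_induction with
  | mem a ha =>
      obtain ⟨Z, u, v, hZ, rfl⟩ := ha
      exact Submodule.subset_span ⟨Z, u, v ≫ f, hZ, by simp⟩
  | zero =>
      rw [zero_comp]
      exact Submodule.zero_mem _
  | add a b ha hb h1 h2 =>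
      rw [Preadditive.add_comp]
      exact Submodule.add_mem _ h1 h2
  | smul c a ha h1 =>
      rw [CategoryTheory.Linear.smul_comp]
      exact Submodule.smul_mem _ c h1

/-- A Serre functor on a `k`-linear category: an autoequivalence `S` together with
bifunctorial isomorphisms `Hom(X, Y) ≅ D Hom(Y, S X)`. -/
structure SerreData : Type (max (max u (v + 1)) w) where
  S : C ≌ C
  ε : ∀ (X Y : C), (X ⟶ Y) ≃ₗ[k] Module.Dual k (Y ⟶ S.functor.obj X)
  natX : ∀ {X X' Y : C} (f : X ⟶ X') (u : X' ⟶ Y) (v : Y ⟶ S.functor.obj X),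
    ε X Y (f ≫ u) v = ε X' Y u (v ≫ S.functor.map f)
  natY : ∀ {X Y Y' : C} (u : X ⟶ Y) (g : Y ⟶ Y') (v : Y' ⟶ S.functor.obj X),
    ε X Y' (u ≫ g) v = ε X Y u (g ≫ v)

end LinearDefs

section ShiftDefs

variable [HasShift C ℤ]

/-- `X` is `T[1]`-rigid: every morphism `X → X[1]` factoring through `add T[1]` vanishes. -/
def IsRelRigid (T X : C) : Prop :=
  ∀ f : X ⟶ X⟦(1:ℤ)⟧, FactorsThruAdd (T⟦(1:ℤ)⟧) f → f = 0

/-- `T` is a cluster-tilting object. -/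
def IsClusterTilting (T : C) : Prop :=
  (∀ X : C, InAdd T X ↔ ∀ f : T ⟶ X⟦(1:ℤ)⟧, f = 0) ∧
  (∀ X : C, InAdd T X ↔ ∀ f : X ⟶ T⟦(1:ℤ)⟧, f = 0)

/-- `X` is `T[1]`-cluster tilting. -/
def IsRelCT (T X : C) : Prop := IsRelRigid T X ∧ numIndec X = numIndec T

/-- `X` is almost `T[1]`-cluster tilting. -/
def IsAlmostRelCT (T X : C) : Prop := IsRelRigid T X ∧ numIndec X = numIndec T - 1

end ShiftDefs

end CatDefs

section Lam

variable {C : Type u} [Category.{v} C] [Preadditive C]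

/-- The algebra `Λ = End(T)ᵒᵖ`. -/
abbrev Lam (T : C) : Type v := (End T)ᵐᵒᵖ

instance lamSMul (T X : C) : SMul (Lam T) (T ⟶ X) := ⟨fun r f => r.unop ≫ f⟩

lemma lam_smul_def {T X : C} (r : Lam T) (f : T ⟶ X) : r • f = r.unop ≫ f := rfl

instance lamMulAction (T X : C) : MulAction (Lam T) (T ⟶ X) where
  one_smul f := Category.id_comp f
  mul_smul r s f := by
    show (r * s).unop ≫ f = r.unop ≫ (s.unop ≫ f)
    rw [MulOpposite.unop_mul, End.mul_def, Category.assoc]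

instance lamDistribMulAction (T X : C) : DistribMulAction (Lam T) (T ⟶ X) where
  smul_zero r := comp_zero
  smul_add r f g := Preadditive.comp_add _ _ _ _ _ _

instance lamModule (T X : C) : Module (Lam T) (T ⟶ X) where
  add_smul r s f := by
    show (r + s).unop ≫ f = r.unop ≫ f + s.unop ≫ f
    rw [MulOpposite.unop_add, Preadditive.add_comp]
  zero_smul f := zero_comp

/-- The `Λ`-module `Hom_𝒟(T, X)`. -/
noncomputable abbrev Hmod (T X : C) : ModuleCat.{v} (Lam T) := ModuleCat.of (Lam T) (T ⟶ X)

end Lam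

section ModDefs

variable {R : Type v} [Ring R]

/-- A projective presentation `P1 → P0 → M → 0` (with finitely generated projectives). -/
structure ProjPres (M : ModuleCat.{v} R) where
  P1 : ModuleCat.{v} R
  P0 : ModuleCat.{v} R
  fg1 : Module.Finite R P1
  fg0 : Module.Finite R P0
  proj1 : Projective P1
  proj0 : Projective P0
  p : P1 ⟶ P0
  q : P0 ⟶ M
  surj : Function.Surjective q
  exct : LinearMap.range p.hom = LinearMap.ker q.hom

/-- Minimality of a projective presentation: both `q : P0 → M` and the corestriction
`P1 → ker q` of `p` are projective covers. -/
def ProjPres.Minimal {M : ModuleCat.{v} R} (pr : ProjPres M) : Prop :=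
  (∀ K : Submodule R pr.P0, K.map pr.q.hom = ⊤ → K = ⊤) ∧
  (∀ K : Submodule R pr.P1, K.map pr.p.hom = LinearMap.range pr.p.hom → K = ⊤)

/-- `M` is `τ`-rigid, characterized via a minimal projective presentation `P1 →p P0 → M → 0`:
`Hom(M, τM) = 0` iff `Hom(p, M)` is surjective. -/
def IsTauRigid (M : ModuleCat.{v} R) : Prop :=
  ∃ pr : ProjPres M, pr.Minimal ∧ ∀ h : pr.P1 ⟶ M, ∃ g : pr.P0 ⟶ M, pr.p ≫ g = h

/-- `(M, P)` is a `τ`-rigid pair. -/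
def IsTauRigidPair (M P : ModuleCat.{v} R) : Prop :=
  IsTauRigid M ∧ Projective P ∧ ∀ f : P ⟶ M, f = 0

/-- `(M, P)` is a support `τ`-tilting pair. -/
noncomputable def IsSuppTauTiltingPair (M P : ModuleCat.{v} R) : Prop :=
  IsTauRigidPair M P ∧ numIndec M + numIndec P = numIndec (ModuleCat.of R R)

/-- `M` is a support `τ`-tilting module. -/
noncomputable def IsSuppTauTilting (M : ModuleCat.{v} R) : Prop :=
  ∃ P : ModuleCat.{v} R, Module.Finite R P ∧ IsBasic P ∧ IsSuppTauTiltingPair M P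

/-- `M` is a `τ`-tilting module. -/
noncomputable def IsTauTilting (M : ModuleCat.{v} R) : Prop :=
  IsTauRigid M ∧ numIndec M = numIndec (ModuleCat.of R R)

/-- `W` lies in `Fac M`. -/
def InFac (M W : ModuleCat.{v} R) : Prop :=
  ∃ (n : ℕ) (φ : (Fin n → M) →ₗ[R] W), Function.Surjective φ

end ModDefs

end RelCT

namespace RelCT

section MoreCatDefs

variable {C : Type u} [Category.{v} C] [Preadditive C] [HasFiniteBiproducts C] [HasShift C ℤ]

/-- `X` has no nonzero direct summand in `add T[1]`. -/
def NoT1Summand (T X : C) : Prop :=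
  ∀ W : C, IsSummand W X → InAdd (T⟦(1:ℤ)⟧) W → IsZero W

/-- A decomposition `X ≅ X' ⊞ X''` where `X''` is a maximal direct summand of `X`
belonging to `add T[1]`. -/
def MaxDecomp (T X X' X'' : C) : Prop :=
  Nonempty (X ≅ X' ⊞ X'') ∧ InAdd (T⟦(1:ℤ)⟧) X'' ∧ NoT1Summand T X'

/-- The factorization ideal `I_X ⊆ End(T[1])ᵒᵖ` vanishes: every endomorphism of `T[1]`
factoring through `X` is zero. -/
def FactIdealZero (T X : C) : Prop :=
  ∀ f : T⟦(1:ℤ)⟧ ⟶ T⟦(1:ℤ)⟧, (∃ (g : T⟦(1:ℤ)⟧ ⟶ X) (h : X ⟶ T⟦(1:ℤ)⟧), f = g ≫ h) → f = 0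

/-- `X` is a maximal rigid object. -/
def IsMaxRigid (X : C) : Prop :=
  (∀ f : X ⟶ X⟦(1:ℤ)⟧, f = 0) ∧
  ∀ Y : C, (InAdd X Y ↔ ∀ f : (X ⊞ Y) ⟶ (X ⊞ Y)⟦(1:ℤ)⟧, f = 0)

/-- `f : U1 → X` is a minimal right `add U`-approximation of `X`. -/
def IsMinRightApprox (U : C) {U1 X : C} (f : U1 ⟶ X) : Prop :=
  InAdd U U1 ∧ (∀ (U0 : C), InAdd U U0 → ∀ g : U0 ⟶ X, ∃ h : U0 ⟶ U1, h ≫ f = g) ∧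
  (∀ e : U1 ⟶ U1, e ≫ f = f → IsIso e)

/-- `g : X → U2` is a minimal left `add U`-approximation of `X`. -/
def IsMinLeftApprox (U : C) {X U2 : C} (g : X ⟶ U2) : Prop :=
  InAdd U U2 ∧ (∀ (U0 : C), InAdd U U0 → ∀ u : X ⟶ U0, ∃ h : U2 ⟶ U0, g ≫ h = u) ∧
  (∀ e : U2 ⟶ U2, g ≫ e = g → IsIso e)

end MoreCatDefs

section Tau

variable {k : Type w} [Field k] {C : Type u} [Category.{v} C] [Preadditive C]
  [CategoryTheory.Linear k C] [HasShift C ℤ]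

/-- The Auslander–Reiten translation `τ_𝒟 = 𝕊 ∘ [-1]` associated to a Serre functor. -/
abbrev tauD (SD : SerreData k (C := C)) (X : C) : C := (SD.S.functor.obj X)⟦(-1:ℤ)⟧

/-- The inverse Auslander–Reiten translation `τ_𝒟⁻¹ = 𝕊⁻¹ ∘ [1]`. -/
abbrev tauInvD (SD : SerreData k (C := C)) (Y : C) : C := SD.S.inverse.obj (Y⟦(1:ℤ)⟧)

end Tau

section Star

variable {C : Type u} [Category.{v} C] [HasZeroObject C] [Preadditive C] [HasShift C ℤ]
  [∀ n : ℤ, (CategoryTheory.shiftFunctor C n).Additive] [Pretriangulated C]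
  [HasFiniteBiproducts C]

/-- `X` belongs to the subcategory `M ∗ [T[1]]`: there is a triangle
`M_X → X → C_X → M_X[1]` with `M_X ∈ add M` and `X → C_X` factoring through `add T[1]`. -/
def MemStar (T M X : C) : Prop :=
  ∃ (A B : C) (a : A ⟶ X) (b : X ⟶ B) (c : B ⟶ A⟦(1:ℤ)⟧),
    InAdd M A ∧ FactorsThruAdd (T⟦(1:ℤ)⟧) b ∧ Triangle.mk a b c ∈ distTriang C

/-- `X` is a `T[1]`-projective object of the subcategory `M ∗ [T[1]]`. -/
def IsRelProjInStar (T M X : C) : Prop :=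
  MemStar T M X ∧
  ∀ Y : C, MemStar T M Y → ∀ f : X ⟶ Y⟦(1:ℤ)⟧, FactorsThruAdd (T⟦(1:ℤ)⟧) f → f = 0

/-- `N` is (up to isomorphism) `P_{T[1]}(M ∗ [T[1]])`: the direct sum of one copy of each of the
indecomposable `T[1]`-projective objects of `M ∗ [T[1]]`. -/
def IsPTGen (T M N : C) : Prop :=
  IsBasic N ∧ ∀ Y : C, Indec Y → (IsSummand Y N ↔ IsRelProjInStar T M Y)

end Star

section MoreModDefs

variable {R : Type v} [Ring R]

/-- `M` has projective dimension at most one. -/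
def HasPdLeOne (M : ModuleCat.{v} R) : Prop := ∃ pr : ProjPres M, Function.Injective pr.p

/-- `Ext¹(M, M) = 0`: every self-extension of `M` splits. -/
def SelfExtFree (M : ModuleCat.{v} R) : Prop :=
  ∀ (E : ModuleCat.{v} R) (i : M ⟶ E) (q : E ⟶ M), Function.Injective i →
    Function.Surjective q → LinearMap.range i.hom = LinearMap.ker q.hom → ∃ r : E ⟶ M, i ≫ r = 𝟙 M

/-- `M` is a tilting module: projective dimension at most one, no self-extensions,
and `|M| = |R|`. -/
noncomputable def IsTilting (M : ModuleCat.{v} R) : Prop :=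
  HasPdLeOne M ∧ SelfExtFree M ∧ numIndec M = numIndec (ModuleCat.of R R)

end MoreModDefs

end RelCT

open CategoryTheory CategoryTheory.Limits CategoryTheory.Pretriangulated RelCT

section Helpers

variable {C : Type u} [Category.{v} C] [Preadditive C]
  [HasZeroObject C] [HasShift C ℤ] [∀ n : ℤ, (CategoryTheory.shiftFunctor C n).Additive]
  [Pretriangulated C] [HasFiniteBiproducts C]

lemma inAdd_self (T : C) : InAdd T T :=
  ⟨1, biproduct.ι (fun _ : Fin 1 => T) 0, biproduct.π _ 0, by simp⟩

lemma inAdd_biproduct (T : C) (m : ℕ) : InAdd T (⨁ fun _ : Fin m => T) :=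
  ⟨m, 𝟙 _, 𝟙 _, by simp⟩

variable {T : C} (hT : IsClusterTilting T)
include hT

lemma hom_shiftT_zero (f : T ⟶ T⟦(1:ℤ)⟧) : f = 0 :=
  (hT.1 T).mp (inAdd_self T) f

lemma hom_biprodT_shift_zero {m : ℕ} (f : T ⟶ (⨁ fun _ : Fin m => T)⟦(1:ℤ)⟧) : f = 0 :=
  (hT.1 _).mp (inAdd_biproduct T m) f

lemma hom_T_of_addShift_zero {Z : C} (h : InAdd (T⟦(1:ℤ)⟧) Z) (g : T ⟶ Z) : g = 0 := by
  obtain ⟨m, i, p, hip⟩ := h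
  have hgi : g ≫ i = 0 := by
    apply biproduct.hom_ext
    intro j
    rw [zero_comp, Category.assoc]
    exact hom_shiftT_zero hT _
  calc g = (g ≫ i) ≫ p := by rw [Category.assoc, hip, Category.comp_id]
  _ = 0 := by rw [hgi, zero_comp]

/-- Existence of `add T`-resolution triangles. -/
lemma resolution (k : Type w) [Field k] [CategoryTheory.Linear k C]
    [∀ X Y : C, Module.Finite k (X ⟶ Y)] (X : C) :
    ∃ (m : ℕ) (t : (⨁ fun _ : Fin m => T) ⟶ X) (Z : C) (z : X ⟶ Z)
      (w : Z ⟶ (⨁ fun _ : Fin m => T)⟦(1:ℤ)⟧),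
      (Triangle.mk t z w ∈ distTriang C) ∧ (∀ g : T ⟶ X, ∃ h, h ≫ t = g) ∧
      InAdd T (Z⟦(-1:ℤ)⟧) ∧ InAdd (T⟦(1:ℤ)⟧) Z := by
  obtain ⟨m, s, hs⟩ := Module.Finite.exists_fin (R := k) (M := T ⟶ X)
  refine ⟨m, biproduct.desc s, ?_⟩
  have hsurj : ∀ g : T ⟶ X, ∃ h : T ⟶ ⨁ (fun _ : Fin m => T), h ≫ biproduct.desc s = g := by
    intro g
    have hg : g ∈ Submodule.span k (Set.range s) := hs ▸ Submodule.mem_top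
    rw [Submodule.mem_span_range_iff_exists_fun] at hg
    obtain ⟨c, hc⟩ := hg
    refine ⟨∑ j, c j • biproduct.ι (fun _ : Fin m => T) j, ?_⟩
    rw [Preadditive.sum_comp]
    simp only [CategoryTheory.Linear.smul_comp, biproduct.ι_desc]
    exact hc
  obtain ⟨Z, z, w, hdist⟩ := Pretriangulated.distinguished_cocone_triangle (biproduct.desc s)
  have hZ0 : ∀ g : T ⟶ Z, g = 0 := by
    intro g
    have hw : g ≫ w = 0 := hom_biprodT_shift_zero hT _
    obtain ⟨g', hg'⟩ := Triangle.coyoneda_exact₃ _ hdist g hw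
    obtain ⟨h, hh⟩ := hsurj g'
    rw [hg', ← hh]; change (h ≫ biproduct.desc s) ≫ z = 0; rw [Category.assoc]
    have h0 : biproduct.desc s ≫ z = 0 := comp_distTriang_mor_zero₁₂ _ hdist
    show h ≫ (biproduct.desc s ≫ z) = 0
    rw [h0, comp_zero]
  have hZm : InAdd T (Z⟦(-1:ℤ)⟧) := by
    rw [hT.1]
    intro f
    have h0 : f ≫ ((shiftFunctorCompIsoId C (-1 : ℤ) (1 : ℤ) (by ring)).hom.app Z) = 0 :=
      hZ0 _
    calc f = (f ≫ ((shiftFunctorCompIsoId C (-1 : ℤ) (1 : ℤ) (by ring)).hom.app Z)) ≫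
        ((shiftFunctorCompIsoId C (-1 : ℤ) (1 : ℤ) (by ring)).inv.app Z) := by
          rw [Category.assoc, Iso.hom_inv_id_app]
          exact (Category.comp_id f).symm
    _ = 0 := by rw [h0, zero_comp]
  refine ⟨Z, z, w, hdist, hsurj, hZm, ?_⟩
  obtain ⟨r, i, p, hip⟩ := hZm
  let F := CategoryTheory.shiftFunctor C (1 : ℤ)
  let e : Z⟦(-1:ℤ)⟧⟦(1:ℤ)⟧ ≅ Z := (shiftFunctorCompIsoId C (-1 : ℤ) (1 : ℤ) (by ring)).app Z
  let e2 : (⨁ fun _ : Fin r => T)⟦(1:ℤ)⟧ ≅ ⨁ (fun _ : Fin r => T⟦(1:ℤ)⟧) :=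
    (F.mapBiproduct (fun _ : Fin r => T)) ≪≫ biproduct.mapIso (fun _ => Iso.refl _)
  refine ⟨r, e.inv ≫ F.map i ≫ e2.hom, e2.inv ≫ F.map p ≫ e.hom, ?_⟩
  calc (e.inv ≫ F.map i ≫ e2.hom) ≫ (e2.inv ≫ F.map p ≫ e.hom)
      = e.inv ≫ F.map i ≫ (e2.hom ≫ e2.inv) ≫ F.map p ≫ e.hom := by
        simp only [Category.assoc]
  _ = e.inv ≫ (F.map i ≫ F.map p) ≫ e.hom := by rw [Iso.hom_inv_id]; simp
  _ = 𝟙 Z := by rw [← F.map_comp, hip, F.map_id, Category.id_comp, Iso.inv_hom_id]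

/-- A morphism killed by `Hom(T, -)` factors through `add T⟦1⟧`. -/
lemma factorsThruAdd_of_homT_zero (k : Type w) [Field k] [CategoryTheory.Linear k C]
    [∀ X Y : C, Module.Finite k (X ⟶ Y)] {X B : C} (u : X ⟶ B)
    (hu : ∀ g : T ⟶ X, g ≫ u = 0) : FactorsThruAdd (T⟦(1:ℤ)⟧) u := by
  obtain ⟨m, t, Z, z, w, hdist, hsurj, _, hZadd⟩ := resolution hT k X
  have htu : t ≫ u = 0 := by
    apply biproduct.hom_ext'
    intro j
    rw [comp_zero, ← Category.assoc]
    exact hu _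
  obtain ⟨g, hg⟩ := Triangle.yoneda_exact₂ _ hdist u htu
  exact ⟨Z, z, g, hZadd, hg⟩

/-- If `A ∈ add M` covers `X` via `Hom(T,-)`, then `X ∈ M ∗ [T⟦1⟧]`. -/
lemma memStar_of_cover (k : Type w) [Field k] [CategoryTheory.Linear k C]
    [∀ X Y : C, Module.Finite k (X ⟶ Y)] {M A X : C} (hA : InAdd M A) (a : A ⟶ X)
    (hsurj : ∀ g : T ⟶ X, ∃ h : T ⟶ A, h ≫ a = g) : MemStar T M X := by
  obtain ⟨B, b, c, hdist⟩ := Pretriangulated.distinguished_cocone_triangle a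
  refine ⟨A, B, a, b, c, hA, ?_, hdist⟩
  apply factorsThruAdd_of_homT_zero hT k
  intro g
  obtain ⟨h, rfl⟩ := hsurj g
  rw [Category.assoc]
  have : a ≫ b = 0 := comp_distTriang_mor_zero₁₂ _ hdist
  rw [this, comp_zero]

/-- Fullness of `Hom(T,-)`. -/
lemma full_homT (k : Type w) [Field k] [CategoryTheory.Linear k C]
    [∀ X Y : C, Module.Finite k (X ⟶ Y)] {A X : C}
    (α : (T ⟶ A) →ₗ[Lam T] (T ⟶ X)) :
    ∃ f : A ⟶ X, ∀ g : T ⟶ A, g ≫ f = α g := by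
  obtain ⟨m, t, Z, z, w, hdist, hsurj, hZm, -⟩ := resolution hT k A
  have smul : ∀ (c : T ⟶ T) (x : T ⟶ A), α (c ≫ x) = c ≫ α x := by
    intro c x
    have h := α.map_smul (MulOpposite.op c) x
    simpa [lam_smul_def] using h
  set g₀ : (⨁ fun _ : Fin m => T) ⟶ X :=
    biproduct.desc (fun j => α (biproduct.ι (fun _ : Fin m => T) j ≫ t)) with hg₀
  have key : ∀ h : T ⟶ ⨁ (fun _ : Fin m => T), h ≫ g₀ = α (h ≫ t) := by
    intro h
    have e1 : h ≫ g₀ = ∑ j, (h ≫ biproduct.π (fun _ : Fin m => T) j) ≫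
        α (biproduct.ι (fun _ : Fin m => T) j ≫ t) := by
      conv_lhs => rw [← Category.comp_id h, ← biproduct.total]
      rw [Preadditive.comp_sum, Preadditive.sum_comp]
      apply Finset.sum_congr rfl
      intro j _
      rw [hg₀]
      simp only [Category.assoc, biproduct.ι_desc]
    have e2 : h ≫ t = ∑ j, (h ≫ biproduct.π (fun _ : Fin m => T) j) ≫
        (biproduct.ι (fun _ : Fin m => T) j ≫ t) := by
      conv_lhs => rw [← Category.comp_id h, ← biproduct.total]
      rw [Preadditive.comp_sum, Preadditive.sum_comp]
      simp only [Category.assoc]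
    rw [e1, e2, map_sum]
    apply Finset.sum_congr rfl
    intro j _
    exact (smul _ _).symm
  have hinv := inv_rot_of_distTriang _ hdist
  have hvt : (Triangle.mk t z w).invRotate.mor₁ ≫ t = 0 :=
    comp_distTriang_mor_zero₁₂ _ hinv
  have hvg₀ : (Triangle.mk t z w).invRotate.mor₁ ≫ g₀ = 0 := by
    have hZm' : InAdd T (Triangle.mk t z w).invRotate.obj₁ := hZm
    obtain ⟨r, i, p, hip⟩ := hZm'
    have hp : p ≫ (Triangle.mk t z w).invRotate.mor₁ ≫ g₀ = 0 := by
      apply biproduct.hom_ext'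
      intro j
      rw [comp_zero]
      calc biproduct.ι (fun _ : Fin r => T) j ≫ p ≫ (Triangle.mk t z w).invRotate.mor₁ ≫ g₀
          = (biproduct.ι (fun _ : Fin r => T) j ≫ p ≫ (Triangle.mk t z w).invRotate.mor₁)
            ≫ g₀ := ((Category.assoc _ _ _).trans (congrArg (_ ≫ ·) (Category.assoc _ _ _))).symm
      _ = α ((biproduct.ι (fun _ : Fin r => T) j ≫ p ≫ (Triangle.mk t z w).invRotate.mor₁)
            ≫ t) := key _
      _ = α (biproduct.ι (fun _ : Fin r => T) j ≫ p ≫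
            ((Triangle.mk t z w).invRotate.mor₁ ≫ t)) :=
              congrArg α ((Category.assoc _ _ _).trans (congrArg (_ ≫ ·) (Category.assoc _ _ _)))
      _ = 0 := by rw [hvt, comp_zero, comp_zero, map_zero]
    calc (Triangle.mk t z w).invRotate.mor₁ ≫ g₀
        = (i ≫ p) ≫ (Triangle.mk t z w).invRotate.mor₁ ≫ g₀ := by
          rw [hip, Category.id_comp]
    _ = 0 := by rw [Category.assoc, hp, comp_zero]
  obtain ⟨f, hf⟩ : ∃ f : A ⟶ X, g₀ = t ≫ f := Triangle.yoneda_exact₂ _ hinv g₀ hvg₀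
  refine ⟨f, fun g => ?_⟩
  obtain ⟨h, rfl⟩ := hsurj g
  have ht : t ≫ f = g₀ := hf.symm
  rw [Category.assoc, ht, key]

/-- Components through a decomposition with `Hom(T, X'') = 0`. -/
lemma comp_decomp {X X' X'' : C} (e : X ≅ X' ⊞ X'') (hX'' : InAdd (T⟦(1:ℤ)⟧) X'')
    (g : T ⟶ X) : (g ≫ e.hom ≫ biprod.fst) ≫ (biprod.inl ≫ e.inv) = g := by
  have h2 : g ≫ e.hom ≫ biprod.snd = 0 := hom_T_of_addShift_zero hT hX'' _
  have htot := biprod.total (X := X') (Y := X'')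
  calc (g ≫ e.hom ≫ biprod.fst) ≫ (biprod.inl ≫ e.inv)
      = (g ≫ e.hom ≫ biprod.fst ≫ biprod.inl
          + (g ≫ e.hom ≫ biprod.snd) ≫ biprod.inr) ≫ e.inv := by
        rw [h2, zero_comp, add_zero]
        simp only [Category.assoc]
  _ = (g ≫ e.hom ≫ (biprod.fst ≫ biprod.inl + biprod.snd ≫ biprod.inr)) ≫ e.inv := by
        simp only [Preadditive.comp_add, Preadditive.add_comp, Category.assoc]
  _ = g := by
        rw [htot, Category.comp_id, Category.assoc, Iso.hom_inv_id, Category.comp_id]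

end Helpers

theorem statement12
    (k : Type w) [Field k]
    {C : Type u} [Category.{v} C] [Preadditive C] [CategoryTheory.Linear k C]
    [HasZeroObject C] [HasShift C ℤ] [∀ n : ℤ, (CategoryTheory.shiftFunctor C n).Additive]
    [Pretriangulated C] [HasFiniteBiproducts C]
    [∀ X Y : C, Module.Finite k (X ⟶ Y)]
    (hKS : KrullSchmidt C)
    (SD : SerreData k (C := C))
    (T : C) (hT : IsClusterTilting T) :
    ∀ (M X M' M'' X' X'' : C), MaxDecomp T M M' M'' → MaxDecomp T X X' X'' →
      (MemStar T M X ↔ InFac (Hmod T M') (Hmod T X')) := by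
  intro M X M' M'' X' X'' hM hX
  obtain ⟨⟨eM⟩, hM'', -⟩ := hM
  obtain ⟨⟨eX⟩, hX'', -⟩ := hX
  constructor
  · rintro ⟨A, B, a, b, c, hA, hb, hdist⟩
    -- `Hom(T, b) = 0`
    have hb0 : ∀ g : T ⟶ X, g ≫ b = 0 := by
      obtain ⟨Zb, u, h', hZb, rfl⟩ := hb
      intro g
      rw [← Category.assoc, hom_T_of_addShift_zero hT hZb (g ≫ u), zero_comp]
    have hasurj : ∀ g : T ⟶ X, ∃ h : T ⟶ A, h ≫ a = g := by
      intro g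
      obtain ⟨h, hh⟩ := Triangle.coyoneda_exact₂ _ hdist g (hb0 g)
      exact ⟨h, hh.symm⟩
    obtain ⟨n, iA, pA, hip⟩ := hA
    have hip' : ∀ {W : C} (r : A ⟶ W), iA ≫ pA ≫ r = r := by
      intro W r
      rw [← Category.assoc, hip, Category.id_comp]
    refine ⟨n, ⟨⟨fun v => (∑ j, (v j ≫ (biprod.inl ≫ eM.inv)) ≫
        biproduct.ι (fun _ : Fin n => M) j) ≫ pA ≫ a ≫ eX.hom ≫ biprod.fst, ?_⟩, ?_⟩, ?_⟩
    · intro v u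
      show (∑ j, (((v j : T ⟶ M') + (u j : T ⟶ M')) ≫ (biprod.inl ≫ eM.inv)) ≫
          biproduct.ι (fun _ : Fin n => M) j) ≫ pA ≫ a ≫ eX.hom ≫ biprod.fst
        = (∑ j, ((v j : T ⟶ M') ≫ (biprod.inl ≫ eM.inv)) ≫
          biproduct.ι (fun _ : Fin n => M) j) ≫ pA ≫ a ≫ eX.hom ≫ biprod.fst
        + (∑ j, ((u j : T ⟶ M') ≫ (biprod.inl ≫ eM.inv)) ≫
          biproduct.ι (fun _ : Fin n => M) j) ≫ pA ≫ a ≫ eX.hom ≫ biprod.fst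
      have tst : ∀ j : Fin n, ((v j : T ⟶ M') + (u j : T ⟶ M')) ≫ (biprod.inl ≫ eM.inv)
          = (v j : T ⟶ M') ≫ (biprod.inl ≫ eM.inv) + (u j : T ⟶ M') ≫ (biprod.inl ≫ eM.inv) :=
        fun j => Preadditive.add_comp _ _ _ _ _ _
      simp only [tst, Preadditive.add_comp, Finset.sum_add_distrib]
    · intro r v
      show (∑ j, ((MulOpposite.unop r ≫ (v j : T ⟶ M')) ≫ (biprod.inl ≫ eM.inv)) ≫
          biproduct.ι (fun _ : Fin n => M) j) ≫ pA ≫ a ≫ eX.hom ≫ biprod.fst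
        = MulOpposite.unop r ≫ ((∑ j, ((v j : T ⟶ M') ≫ (biprod.inl ≫ eM.inv)) ≫
          biproduct.ι (fun _ : Fin n => M) j) ≫ pA ≫ a ≫ eX.hom ≫ biprod.fst)
      simp only [Preadditive.sum_comp, Preadditive.comp_sum, Category.assoc]
    · intro h
      set g : T ⟶ X := h ≫ (biprod.inl ≫ eX.inv) with hg
      obtain ⟨w0, hw0⟩ := hasurj g
      refine ⟨fun j => ((w0 ≫ iA ≫ biproduct.π (fun _ : Fin n => M) j) ≫ eM.hom ≫
        biprod.fst), ?_⟩
      show (∑ j, ((((w0 ≫ iA ≫ biproduct.π (fun _ : Fin n => M) j) ≫ eM.hom ≫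
          biprod.fst)) ≫ (biprod.inl ≫ eM.inv)) ≫ biproduct.ι (fun _ : Fin n => M) j) ≫
          pA ≫ a ≫ eX.hom ≫ biprod.fst = h
      have hS : (∑ j, ((((w0 ≫ iA ≫ biproduct.π (fun _ : Fin n => M) j) ≫ eM.hom ≫
          biprod.fst)) ≫ (biprod.inl ≫ eM.inv)) ≫ biproduct.ι (fun _ : Fin n => M) j)
          = w0 ≫ iA := by
        have hvj : ∀ j, (((w0 ≫ iA ≫ biproduct.π (fun _ : Fin n => M) j) ≫ eM.hom ≫
            biprod.fst)) ≫ (biprod.inl ≫ eM.inv) = w0 ≫ iA ≫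
            biproduct.π (fun _ : Fin n => M) j := fun j => comp_decomp hT eM hM'' _
        calc (∑ j, ((((w0 ≫ iA ≫ biproduct.π (fun _ : Fin n => M) j) ≫ eM.hom ≫
            biprod.fst)) ≫ (biprod.inl ≫ eM.inv)) ≫ biproduct.ι (fun _ : Fin n => M) j)
            = ∑ j, (w0 ≫ iA ≫ biproduct.π (fun _ : Fin n => M) j) ≫
              biproduct.ι (fun _ : Fin n => M) j := by
              apply Finset.sum_congr rfl
              intro j _
              rw [hvj]
        _ = w0 ≫ iA := by
              conv_rhs => rw [← Category.comp_id (w0 ≫ iA), ← biproduct.total]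
              rw [Preadditive.comp_sum]
              simp only [Category.assoc]
      rw [hS, Category.assoc, hip']
      calc w0 ≫ a ≫ eX.hom ≫ biprod.fst = (w0 ≫ a) ≫ eX.hom ≫ biprod.fst := by
            rw [Category.assoc]
      _ = h := by rw [hw0, hg]; simp
  · rintro ⟨n, φ, hφ⟩
    have hMadd : InAdd M (⨁ fun _ : Fin n => M') := by
      refine ⟨n, biproduct.map (fun _ => biprod.inl ≫ eM.inv),
        biproduct.map (fun _ => eM.hom ≫ biprod.fst), ?_⟩
      apply biproduct.hom_ext
      intro j
      simp
    set α : (T ⟶ ⨁ fun _ : Fin n => M') →ₗ[Lam T] (T ⟶ X) :=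
      { toFun := fun g => φ (fun j => g ≫ biproduct.π (fun _ : Fin n => M') j) ≫
          (biprod.inl ≫ eX.inv)
        map_add' := by
          intro g g'
          show φ (fun j => (g + g') ≫ biproduct.π (fun _ : Fin n => M') j) ≫
              (biprod.inl ≫ eX.inv)
            = φ (fun j => g ≫ biproduct.π (fun _ : Fin n => M') j) ≫ (biprod.inl ≫ eX.inv)
            + φ (fun j => g' ≫ biproduct.π (fun _ : Fin n => M') j) ≫ (biprod.inl ≫ eX.inv)
          have he : (fun j => (g + g') ≫ biproduct.π (fun _ : Fin n => M') j)
              = (fun j => g ≫ biproduct.π (fun _ : Fin n => M') j)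
              + (fun j => g' ≫ biproduct.π (fun _ : Fin n => M') j) := by
            funext j
            show (g + g') ≫ biproduct.π (fun _ : Fin n => M') j
              = g ≫ biproduct.π (fun _ : Fin n => M') j
              + g' ≫ biproduct.π (fun _ : Fin n => M') j
            rw [Preadditive.add_comp]
          rw [he, map_add]
          exact Preadditive.add_comp _ _ _ _ _ _
        map_smul' := by
          intro r g
          show φ (fun j => (r • g) ≫ biproduct.π (fun _ : Fin n => M') j) ≫
              (biprod.inl ≫ eX.inv)
            = MulOpposite.unop r ≫ (φ (fun j => g ≫ biproduct.π (fun _ : Fin n => M') j) ≫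
              (biprod.inl ≫ eX.inv))
          have he : (fun j => (r • g) ≫ biproduct.π (fun _ : Fin n => M') j)
              = r • (fun j => g ≫ biproduct.π (fun _ : Fin n => M') j) := by
            funext j
            show (MulOpposite.unop r ≫ g) ≫ biproduct.π (fun _ : Fin n => M') j
              = MulOpposite.unop r ≫ (g ≫ biproduct.π (fun _ : Fin n => M') j)
            rw [Category.assoc]
          rw [he, map_smul]
          exact Category.assoc _ _ _ } with hα
    obtain ⟨f, hf⟩ := full_homT hT k α
    apply memStar_of_cover hT k hMadd f
    intro g
    obtain ⟨v, hv⟩ := hφ (g ≫ eX.hom ≫ biprod.fst)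
    refine ⟨biproduct.lift v, ?_⟩
    rw [hf]
    show φ (fun j => biproduct.lift v ≫ biproduct.π (fun _ : Fin n => M') j) ≫
      (biprod.inl ≫ eX.inv) = g
    have he : (fun j => biproduct.lift v ≫ biproduct.π (fun _ : Fin n => M') j) = v := by
      funext j
      rw [biproduct.lift_π]
    rw [he, hv]
    exact comp_decomp hT eX hX'' g
end

section
/- For any two objects M and N of 𝒟: M∗[T[1]] ⊆ N∗[T[1]] in 𝒟 if and only if Fac Hom_𝒟(T, M′) ⊆ Fac Hom_𝒟(T, N′) in mod Λ. In particular, the bijection X ↦ X̃ between basic T[1]-cluster tilting objects of 𝒟 and basic support τ-tilting Λ-modules is an isomorphism of partially ordered sets, where T[1]-cluster tilting objects are ordered by M ≥ N iff M∗[T[1]] ⊇ N∗[T[1]] and support τ-tilting modules by M ≥ N iff Fac M ⊇ Fac N. -/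
/- Common definitions for formalizing "Relative cluster tilting objects in
triangulated categories" (Yang–Zhu). -/

open CategoryTheory CategoryTheory.Limits CategoryTheory.Pretriangulated

universe w v u

attribute [local instance] CategoryTheory.Limits.hasBinaryBiproducts_of_finite_biproducts

open CategoryTheory CategoryTheory.Limits CategoryTheory.Pretriangulated RelCT

namespace RelCT

section ProofHelpers

variable {C : Type u} [Category.{v} C] [Preadditive C] [HasFiniteBiproducts C]

lemma summand_refl (X : C) : IsSummand X X := ⟨𝟙 X, 𝟙 X, by simp⟩

lemma summand_trans {X Y Z : C} (h1 : IsSummand X Y) (h2 : IsSummand Y Z) : IsSummand X Z := by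
  obtain ⟨i, p, hip⟩ := h1; obtain ⟨j, q, hjq⟩ := h2
  exact ⟨i ≫ j, q ≫ p, by rw [Category.assoc, ← Category.assoc j, hjq, Category.id_comp, hip]⟩

lemma summand_of_iso {X X' Y : C} (e : X ≅ X') (h : IsSummand X Y) : IsSummand X' Y :=
  summand_trans ⟨e.inv, e.hom, e.inv_hom_id⟩ h

lemma summand_map {D : Type*} [Category D] (F : C ⥤ D) {X Y : C} (h : IsSummand X Y) :
    IsSummand (F.obj X) (F.obj Y) := by
  obtain ⟨i, p, hip⟩ := h
  exact ⟨F.map i, F.map p, by rw [← F.map_comp, hip, F.map_id]⟩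

lemma inAdd_self (M : C) : InAdd M M :=
  ⟨1, biproduct.ι (fun _ : Fin 1 => M) 0, biproduct.π _ 0, biproduct.ι_π_self _ 0⟩

lemma inAdd_of_iso {M X Y : C} (e : X ≅ Y) (h : InAdd M X) : InAdd M Y :=
  h.imp fun _ hs => summand_of_iso e hs

lemma summand_biproduct {n : ℕ} {f g : Fin n → C} (h : ∀ j, IsSummand (f j) (g j)) :
    IsSummand (⨁ f) (⨁ g) := by
  choose i p hip using h
  refine ⟨biproduct.map i, biproduct.map p, ?_⟩
  apply biproduct.hom_ext; intro j
  apply biproduct.hom_ext'; intro j'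
  by_cases hjj : j' = j
  · subst hjj; simp [hip j']
  · simp [biproduct.ι_π_ne_assoc _ hjj, biproduct.ι_π_ne _ hjj]

lemma inAdd_of_iso_base {M M' X : C} (e : M ≅ M') (h : InAdd M X) : InAdd M' X := by
  obtain ⟨n, hs⟩ := h
  exact ⟨n, summand_trans hs (summand_biproduct fun _ => ⟨e.hom, e.inv, e.hom_inv_id⟩)⟩

lemma summand_map_biproduct (F : C ⥤ C) [F.Additive] {n : ℕ} (f : Fin n → C) :
    IsSummand (F.obj (⨁ f)) (⨁ fun j => F.obj (f j)) := by
  refine ⟨biproduct.lift (fun j => F.map (biproduct.π f j)),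
    biproduct.desc (fun j => F.map (biproduct.ι f j)), ?_⟩
  rw [biproduct.lift_desc]
  simp only [← F.map_comp]
  rw [← F.map_sum, biproduct.total, F.map_id]

lemma inAdd_map (F : C ⥤ C) [F.Additive] {M X : C} (h : InAdd M X) :
    InAdd (F.obj M) (F.obj X) := by
  obtain ⟨n, hs⟩ := h
  exact ⟨n, summand_trans (summand_map F hs) (summand_map_biproduct F _)⟩

end ProofHelpers

section TriangHelpers

variable {C : Type u} [Category.{v} C] [HasZeroObject C] [Preadditive C]
  [HasFiniteBiproducts C] [HasShift C ℤ]
  [∀ n : ℤ, (CategoryTheory.shiftFunctor C n).Additive] [Pretriangulated C]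
variable {T : C}

lemma hom_to_shift_zero (hT : IsClusterTilting T) : ∀ f : T ⟶ T⟦(1:ℤ)⟧, f = 0 :=
  (hT.1 T).mp (inAdd_self T)

lemma hom_T_zero (hT : IsClusterTilting T) {Z : C} (hZ : InAdd (T⟦(1:ℤ)⟧) Z) (f : T ⟶ Z) :
    f = 0 := by
  obtain ⟨n, i, p, hip⟩ := hZ
  have h1 : f ≫ i = 0 := by
    apply biproduct.hom_ext; intro j
    rw [zero_comp, Category.assoc]
    exact hom_to_shift_zero hT _
  rw [← Category.comp_id f, ← hip, ← Category.assoc, h1, zero_comp]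

lemma zero_of_inAdd_source {Y X : C} (hY : InAdd T Y) {h : Y ⟶ X}
    (hh : ∀ t : T ⟶ Y, t ≫ h = 0) : h = 0 := by
  obtain ⟨n, i, p, hip⟩ := hY
  have h1 : p ≫ h = 0 := by
    apply biproduct.hom_ext'; intro j
    rw [comp_zero, ← Category.assoc]
    exact hh _
  rw [← Category.id_comp h, ← hip, Category.assoc, h1, comp_zero]

variable (k : Type w) [Field k] [CategoryTheory.Linear k C]
  [∀ X Y : C, Module.Finite k (X ⟶ Y)]

include k

lemma exists_presentation (hT : IsClusterTilting T) (X : C) :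
    ∃ (r : ℕ) (g : (⨁ fun _ : Fin r => T) ⟶ X) (Z : C) (h : X ⟶ Z)
      (c : Z ⟶ (⨁ fun _ : Fin r => T)⟦(1:ℤ)⟧),
      (∀ t : T ⟶ X, ∃ s, s ≫ g = t) ∧ InAdd (T⟦(1:ℤ)⟧) Z ∧
      Triangle.mk g h c ∈ distTriang C := by
  obtain ⟨r, s, hs⟩ := Module.Finite.exists_fin (R := k) (M := T ⟶ X)
  set g : (⨁ fun _ : Fin r => T) ⟶ X := biproduct.desc s with hg
  have approx : ∀ t : T ⟶ X, ∃ u, u ≫ g = t := by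
    intro t
    have ht : t ∈ Submodule.span k (Set.range s) := hs ▸ Submodule.mem_top
    obtain ⟨cc, hcc⟩ := (Submodule.mem_span_range_iff_exists_fun (R := k)).mp ht
    refine ⟨∑ i, cc i • biproduct.ι (fun _ : Fin r => T) i, ?_⟩
    rw [Preadditive.sum_comp]
    simp only [Linear.smul_comp, hg, biproduct.ι_desc]
    exact hcc
  obtain ⟨Z, h, c, hdist⟩ := Pretriangulated.distinguished_cocone_triangle g
  refine ⟨r, g, Z, h, c, approx, ?_, hdist⟩
  have hZ1 : ∀ f : T ⟶ Z, f = 0 := by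
    intro f
    have hc : f ≫ c = 0 :=
      hom_T_zero hT (inAdd_map (CategoryTheory.shiftFunctor C (1:ℤ))
        ⟨r, summand_refl _⟩) _
    obtain ⟨t, ht⟩ := Triangle.coyoneda_exact₃ _ hdist f hc
    obtain ⟨u, hu⟩ := approx t
    have hgh : g ≫ h = 0 := comp_distTriang_mor_zero₁₂ _ hdist
    have ht' : f = t ≫ h := ht
    rw [ht', ← hu]
    erw [Category.assoc]
    erw [hgh, comp_zero]
  have e2 : ((Z⟦(-1:ℤ)⟧)⟦(1:ℤ)⟧ : C) ≅ Z :=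
    (shiftFunctorCompIsoId C (-1:ℤ) (1:ℤ) (by norm_num)).app Z
  have hZm : InAdd T (Z⟦(-1:ℤ)⟧) := by
    refine (hT.1 _).mpr (fun f => ?_)
    have h0 := hZ1 (f ≫ e2.hom)
    calc f = (f ≫ e2.hom) ≫ e2.inv := by rw [Category.assoc, e2.hom_inv_id, Category.comp_id]
    _ = 0 := by rw [h0, zero_comp]
  exact inAdd_of_iso e2 (inAdd_map (CategoryTheory.shiftFunctor C (1:ℤ)) hZm)

lemma realize_hom (hT : IsClusterTilting T) (A0 X : C)
    (φ : (T ⟶ A0) →ₗ[Lam T] (T ⟶ X)) :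
    ∃ f : A0 ⟶ X, ∀ t : T ⟶ A0, t ≫ f = φ t := by
  obtain ⟨r, g, Z, h, c, approx, hZ, hdist⟩ := exists_presentation k hT A0
  set f0 : (⨁ fun _ : Fin r => T) ⟶ X :=
    biproduct.desc (fun j => φ (biproduct.ι (fun _ : Fin r => T) j ≫ g)) with hf0def
  have hf0 : ∀ s : T ⟶ ⨁ (fun _ : Fin r => T), s ≫ f0 = φ (s ≫ g) := by
    intro s
    have hs : s = ∑ j, (s ≫ biproduct.π (fun _ : Fin r => T) j) ≫ biproduct.ι (fun _ : Fin r => T) j := by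
      conv_lhs => rw [← Category.comp_id s, ← biproduct.total]
      rw [Preadditive.comp_sum]
      exact Finset.sum_congr rfl fun j _ => (Category.assoc _ _ _).symm
    conv_lhs => rw [hs]
    rw [Preadditive.sum_comp]
    have hterm : ∀ j, ((s ≫ biproduct.π (fun _ : Fin r => T) j) ≫ biproduct.ι (fun _ : Fin r => T) j) ≫ f0
        = φ ((s ≫ biproduct.π (fun _ : Fin r => T) j) ≫ (biproduct.ι (fun _ : Fin r => T) j ≫ g)) := by
      intro j
      rw [Category.assoc, hf0def, biproduct.ι_desc]
      exact (φ.map_smul (MulOpposite.op (s ≫ biproduct.π (fun _ : Fin r => T) j : End T))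
        (biproduct.ι (fun _ : Fin r => T) j ≫ g)).symm
    rw [Finset.sum_congr rfl fun j _ => hterm j, ← map_sum]
    congr 1
    have : ∑ j, (s ≫ biproduct.π (fun _ : Fin r => T) j) ≫ (biproduct.ι (fun _ : Fin r => T) j ≫ g)
        = (∑ j, (s ≫ biproduct.π (fun _ : Fin r => T) j) ≫ biproduct.ι (fun _ : Fin r => T) j) ≫ g := by
      rw [Preadditive.sum_comp]
      exact Finset.sum_congr rfl fun j _ => (Category.assoc _ _ _).symm
    rw [this, ← hs]
  have hinv := inv_rot_of_distTriang _ hdist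
  have hpg : (Triangle.mk g h c).invRotate.mor₁ ≫ g = 0 := comp_distTriang_mor_zero₁₂ _ hinv
  have hTZ : InAdd T (Z⟦(-1:ℤ)⟧) :=
    inAdd_of_iso_base ((shiftFunctorCompIsoId C (1:ℤ) (-1:ℤ) (by norm_num)).app T)
      (inAdd_map (CategoryTheory.shiftFunctor C (-1:ℤ)) hZ)
  have hpf0 : (Triangle.mk g h c).invRotate.mor₁ ≫ f0 = 0 := by
    apply zero_of_inAdd_source hTZ
    intro t
    erw [← Category.assoc]
    erw [hf0 (t ≫ _), Category.assoc, hpg, comp_zero, map_zero]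
  obtain ⟨f, hf⟩ := Triangle.yoneda_exact₂ _ hinv f0 hpf0
  refine ⟨f, fun t => ?_⟩
  obtain ⟨u, hu⟩ := approx t
  have hf' : f0 = g ≫ f := hf
  rw [← hu]
  erw [Category.assoc]
  rw [← hf', hf0, hu]

end TriangHelpers

section LamHelpers

variable {C : Type u} [Category.{v} C] [Preadditive C] [HasFiniteBiproducts C]
variable (T : C)

def toLam {C : Type u} [Category.{v} C] (T : C) (f : T ⟶ T) : Lam T := MulOpposite.op f

noncomputable def sumCompLin {M' X : C} (n : ℕ) (κ : Fin n → (M' ⟶ X)) :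
    (Fin n → (T ⟶ M')) →ₗ[Lam T] (T ⟶ X) where
  toFun g := ∑ i, g i ≫ κ i
  map_add' g g' := by
    simp only [Pi.add_apply, Preadditive.add_comp]
    exact Finset.sum_add_distrib
  map_smul' r g := by
    simp only [Pi.smul_apply, RingHom.id_apply, lam_smul_def, Category.assoc]
    rw [Preadditive.comp_sum]

noncomputable def compsLin (M' : C) (n : ℕ) :
    (T ⟶ ⨁ (fun _ : Fin n => M')) →ₗ[Lam T] (Fin n → (T ⟶ M')) where
  toFun t := fun i => t ≫ biproduct.π _ i
  map_add' t t' := funext fun i => Preadditive.add_comp _ _ _ _ _ _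
  map_smul' r t := funext fun i => Category.assoc _ _ _

@[simp] lemma sumCompLin_apply {M' X : C} (n : ℕ) (κ : Fin n → (M' ⟶ X))
    (g : Fin n → (T ⟶ M')) : sumCompLin T n κ g = ∑ i, g i ≫ κ i := rfl

lemma compsLin_surj (M' : C) (n : ℕ) : Function.Surjective (compsLin T M' n) :=
  fun g => ⟨biproduct.lift g, funext fun i => biproduct.lift_π _ _⟩

end LamHelpers

section MainHelpers

variable {C : Type u} [Category.{v} C] [HasZeroObject C] [Preadditive C]
  [HasFiniteBiproducts C] [HasShift C ℤ]
  [∀ n : ℤ, (CategoryTheory.shiftFunctor C n).Additive] [Pretriangulated C]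
variable (k : Type w) [Field k] [CategoryTheory.Linear k C]
  [∀ X Y : C, Module.Finite k (X ⟶ Y)]
variable {T : C}

include k

lemma hom_T_factor (hT : IsClusterTilting T) {M M' M'' : C}
    (hM'' : InAdd (T⟦(1:ℤ)⟧) M'') (e : M ≅ M' ⊞ M'') (t : T ⟶ M) :
    (t ≫ e.hom ≫ biprod.fst) ≫ (biprod.inl ≫ e.inv) = t := by
  have hsnd : (t ≫ e.hom) ≫ biprod.snd = 0 := hom_T_zero hT hM'' _
  have h1 : (t ≫ e.hom) ≫ (biprod.fst ≫ biprod.inl + biprod.snd ≫ biprod.inr) = t ≫ e.hom := by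
    rw [biprod.total, Category.comp_id]
  rw [Preadditive.comp_add, ← Category.assoc (t ≫ e.hom) biprod.snd biprod.inr, hsnd,
    zero_comp, add_zero] at h1
  calc (t ≫ e.hom ≫ biprod.fst) ≫ biprod.inl ≫ e.inv
      = ((t ≫ e.hom) ≫ (biprod.fst ≫ biprod.inl)) ≫ e.inv := by simp only [Category.assoc]
    _ = (t ≫ e.hom) ≫ e.inv := by rw [h1]
    _ = t := by rw [Category.assoc, e.hom_inv_id, Category.comp_id]

lemma hmod_finite (hT : IsClusterTilting T) (X : C) : Module.Finite (Lam T) (T ⟶ X) := by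
  obtain ⟨n, s, hs⟩ := Module.Finite.exists_fin (R := k) (M := T ⟶ X)
  rw [Module.finite_def, Submodule.fg_def]
  refine ⟨Set.range s, Set.finite_range s, eq_top_iff.mpr ?_⟩
  rintro x -
  have hx : x ∈ Submodule.span k (Set.range s) := hs ▸ Submodule.mem_top
  induction hx using Submodule.span_induction with
  | mem a ha => exact Submodule.subset_span ha
  | zero => exact Submodule.zero_mem _
  | add a b _ _ h1 h2 => exact Submodule.add_mem _ h1 h2
  | smul c a _ h1 =>
      have hca : c • a = (toLam T (c • 𝟙 T)) • a := by
        show c • a = (c • 𝟙 T) ≫ a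
        rw [Linear.smul_comp, Category.id_comp]
      rw [hca]
      exact Submodule.smul_mem _ _ h1

lemma memStar_iff (hT : IsClusterTilting T) {M M' M'' : C} (hdec : MaxDecomp T M M' M'')
    (X : C) : MemStar T M X ↔ InFac (Hmod T M') (Hmod T X) := by
  obtain ⟨⟨e⟩, hM'', -⟩ := hdec
  constructor
  · rintro ⟨A, B, a, b, cc, hA, ⟨Zb, u, v, hZb, hbfac⟩, hdist⟩
    have hsurj : ∀ t : T ⟶ X, ∃ s : T ⟶ A, s ≫ a = t := by
      intro t
      have htb : t ≫ b = 0 := by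
        rw [hbfac, ← Category.assoc, show t ≫ u = 0 from hom_T_zero hT hZb _, zero_comp]
      obtain ⟨s, hsa⟩ := Triangle.coyoneda_exact₂ _ hdist t htb
      exact ⟨s, hsa.symm⟩
    obtain ⟨n, iA, pA, hiA⟩ := hA
    refine ⟨n, sumCompLin T n (fun i =>
      biprod.inl ≫ e.inv ≫ biproduct.ι (fun _ : Fin n => M) i ≫ pA ≫ a), ?_⟩
    intro t
    obtain ⟨s, hsa⟩ := hsurj t
    refine ⟨fun i => (s ≫ iA ≫ biproduct.π (fun _ : Fin n => M) i) ≫ e.hom ≫ biprod.fst, ?_⟩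
    have hterm : ∀ i : Fin n,
        ((s ≫ iA ≫ biproduct.π (fun _ : Fin n => M) i) ≫ e.hom ≫ biprod.fst) ≫
          (biprod.inl ≫ e.inv ≫ biproduct.ι (fun _ : Fin n => M) i ≫ pA ≫ a)
        = (s ≫ iA) ≫ ((biproduct.π (fun _ : Fin n => M) i ≫ biproduct.ι (fun _ : Fin n => M) i) ≫ (pA ≫ a)) := by
      intro i
      have hfac := hom_T_factor k hT hM'' e (s ≫ iA ≫ biproduct.π (fun _ : Fin n => M) i)
      calc ((s ≫ iA ≫ biproduct.π (fun _ : Fin n => M) i) ≫ e.hom ≫ biprod.fst) ≫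
            (biprod.inl ≫ e.inv ≫ biproduct.ι (fun _ : Fin n => M) i ≫ pA ≫ a)
          = (((s ≫ iA ≫ biproduct.π (fun _ : Fin n => M) i) ≫ e.hom ≫ biprod.fst) ≫
              (biprod.inl ≫ e.inv)) ≫ (biproduct.ι (fun _ : Fin n => M) i ≫ pA ≫ a) := by
            simp only [Category.assoc]
        _ = (s ≫ iA ≫ biproduct.π (fun _ : Fin n => M) i) ≫
              (biproduct.ι (fun _ : Fin n => M) i ≫ pA ≫ a) := by rw [hfac]
        _ = (s ≫ iA) ≫ ((biproduct.π (fun _ : Fin n => M) i ≫ biproduct.ι (fun _ : Fin n => M) i) ≫ (pA ≫ a)) := by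
            simp only [Category.assoc]
    have htot : sumCompLin T n (fun i =>
          biprod.inl ≫ e.inv ≫ biproduct.ι (fun _ : Fin n => M) i ≫ pA ≫ a)
        (fun i => (s ≫ iA ≫ biproduct.π (fun _ : Fin n => M) i) ≫ e.hom ≫ biprod.fst) = t := by
      rw [sumCompLin_apply]
      rw [Finset.sum_congr rfl fun i _ => hterm i, ← Preadditive.comp_sum,
        ← Preadditive.sum_comp, biproduct.total, Category.id_comp]
      have hiA' : iA ≫ pA ≫ a = a := by rw [← Category.assoc, hiA, Category.id_comp]
      rw [Category.assoc, hiA', hsa]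
    exact htot
  · rintro ⟨m, φ, hφ⟩
    obtain ⟨f, hf⟩ := realize_hom k hT (⨁ (fun _ : Fin m => M')) X
      ((φ : (Fin m → (T ⟶ M')) →ₗ[Lam T] (T ⟶ X)).comp (compsLin T M' m))
    obtain ⟨B, b, cb, hdistB⟩ := Pretriangulated.distinguished_cocone_triangle f
    obtain ⟨r, g, Z, h, cz, approx, hZ, hdistX⟩ := exists_presentation k hT X
    have hfb : f ≫ b = 0 := comp_distTriang_mor_zero₁₂ _ hdistB
    have hbt : ∀ t : T ⟶ X, t ≫ b = 0 := by
      intro t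
      obtain ⟨u, hu⟩ := hφ.comp (compsLin_surj T M' m) t
      have hu' : u ≫ f = t := by rw [hf u]; exact hu
      rw [← hu', Category.assoc, hfb, comp_zero]
    have hgb : g ≫ b = 0 := by
      apply zero_of_inAdd_source ⟨r, summand_refl _⟩
      intro t
      rw [← Category.assoc]
      exact hbt _
    obtain ⟨wz, hwz⟩ := Triangle.yoneda_exact₂ _ hdistX b hgb
    have hwz' : b = h ≫ wz := hwz
    refine ⟨⨁ (fun _ : Fin m => M'), B, f, b, cb, ?_, ⟨Z, h, wz, hZ, hwz'⟩, hdistB⟩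
    exact ⟨m, summand_biproduct fun _ => ⟨biprod.inl ≫ e.inv, e.hom ≫ biprod.fst, by simp⟩⟩

lemma master (hT : IsClusterTilting T) (M N M' M'' N' N'' : C)
    (hM : MaxDecomp T M M' M'') (hN : MaxDecomp T N N' N'') :
    (∀ X : C, MemStar T M X → MemStar T N X) ↔
    (∀ W : ModuleCat.{v} (Lam T), Module.Finite (Lam T) ↥W →
       InFac (Hmod T M') W → InFac (Hmod T N') W) := by
  constructor
  · rintro hstar W _ ⟨n, π, hπ⟩
    have hY : MemStar T M (⨁ fun _ : Fin n => M') := by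
      refine ⟨⨁ (fun _ : Fin n => M'), (contractibleTriangle (⨁ (fun _ : Fin n => M'))).obj₃,
        𝟙 _, 0, 0, ?_, ?_, contractible_distinguished _⟩
      · obtain ⟨⟨e⟩, hM'', -⟩ := hM
        exact ⟨n, summand_biproduct fun _ => ⟨biprod.inl ≫ e.inv, e.hom ≫ biprod.fst, by simp⟩⟩
      · exact ⟨T⟦(1:ℤ)⟧, 0, 0, inAdd_self _, (zero_comp).symm⟩
    obtain ⟨m, ψ, hψ⟩ := (memStar_iff k hT hN _).mp (hstar _ hY)
    exact ⟨m, π.comp ((compsLin T M' n).comp ψ),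
      hπ.comp ((compsLin_surj T M' n).comp hψ)⟩
  · intro hfac X hX
    exact (memStar_iff k hT hN X).mpr
      (hfac (Hmod T X) (hmod_finite k hT X) ((memStar_iff k hT hM X).mp hX))

end MainHelpers

end RelCT

theorem statement13
    (k : Type w) [Field k]
    {C : Type u} [Category.{v} C] [Preadditive C] [CategoryTheory.Linear k C]
    [HasZeroObject C] [HasShift C ℤ] [∀ n : ℤ, (CategoryTheory.shiftFunctor C n).Additive]
    [Pretriangulated C] [HasFiniteBiproducts C]
    [∀ X Y : C, Module.Finite k (X ⟶ Y)]
    (hKS : KrullSchmidt C)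
    (SD : SerreData k (C := C))
    (T : C) (hT : IsClusterTilting T) :
    ((∀ (M N M' M'' N' N'' : C), MaxDecomp T M M' M'' → MaxDecomp T N N' N'' →
        ((∀ X : C, MemStar T M X → MemStar T N X) ↔
         (∀ W : ModuleCat.{v} (Lam T), Module.Finite (Lam T) ↥W →
            InFac (Hmod T M') W → InFac (Hmod T N') W))) ∧
     (∀ (M N M' M'' N' N'' : C), IsBasic M → IsRelCT T M → IsBasic N → IsRelCT T N →
        MaxDecomp T M M' M'' → MaxDecomp T N N' N'' →
        ((∀ X : C, MemStar T N X → MemStar T M X) ↔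
         (∀ W : ModuleCat.{v} (Lam T), Module.Finite (Lam T) ↥W →
            InFac (Hmod T N') W → InFac (Hmod T M') W)))) := by
  constructor
  · intro M N M' M'' N' N'' hM hN
    exact RelCT.master k hT M N M' M'' N' N'' hM hN
  · intro M N M' M'' N' N'' _ _ _ _ hM hN
    exact RelCT.master k hT N M N' N'' M' M'' hN hM
end
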